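/- Let A be a noetherian ring and S a profinite set. Then the ring LC(S,A) of locally constant functions S → A is coherent, i.e., every finitely generated ideal of LC(S,A) is finitely presented. -/

import Mathlib

open LocallyConstant Set

section Aux

variable {S : Type*} [TopologicalSpace S] {A : Type*}

/-- Combining finitely many locally constant functions into one with values in a Pi type. -/
lemma isLocallyConstant_pi {n : ℕ} (f : Fin n → LocallyConstant S A) :
    IsLocallyConstant (fun x i => f i x) := by
  rw [IsLocallyConstant.iff_exists_open]
  intro x
  refine ⟨⋂ i, (f i) ⁻¹' {f i x}, isOpen_iInter_of_finite fun i =>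
    (f i).isLocallyConstant.isOpen_fiber _, ?_, ?_⟩
  · simp
  · intro y hy
    simp only [Set.mem_iInter, Set.mem_preimage, Set.mem_singleton_iff] at hy
    funext i
    exact hy i

lemma lc_sum_apply [CommRing A] {ι : Type*} (s : Finset ι)
    (h : ι → LocallyConstant S A) (x : S) :
    (∑ i ∈ s, h i) x = ∑ i ∈ s, h i x :=
  map_sum (LocallyConstant.evalRingHom x) h s

/-- The main technical lemma: the kernel of a finite linear combination map into
`LocallyConstant S A` is finitely generated when `A` is noetherian and `S` is compact. -/
lemma ker_lincomb_fg
    (A : Type*) [CommRing A] [IsNoetherianRing A]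
    (S : Type*) [TopologicalSpace S] [CompactSpace S]
    (n : ℕ) (f : Fin n → LocallyConstant S A) :
    (LinearMap.ker (Fintype.linearCombination (LocallyConstant S A)
      f)).FG := by
  classical
  set l := Fintype.linearCombination (LocallyConstant S A) f with hl
  -- the combined locally constant map
  set g : LocallyConstant S (Fin n → A) := ⟨fun x i => f i x, isLocallyConstant_pi f⟩ with hg
  -- its finite range
  set V : Finset (Fin n → A) := g.range_finite.toFinset with hV
  -- kernels of the pointwise linear combination maps
  set K : (Fin n → A) → Submodule A (Fin n → A) :=
    fun v => LinearMap.ker (Fintype.linearCombination A v) with hK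
  -- finite generating sets for each kernel
  have hTex : ∀ v, ∃ t : Finset (Fin n → A), Submodule.span A (↑t : Set (Fin n → A)) = K v :=
    fun v => IsNoetherian.noetherian (K v)
  choose T hT using hTex
  have hTsub : ∀ v, ∀ w ∈ T v, w ∈ K v := fun v w hw => (hT v) ▸ Submodule.subset_span hw
  -- the clopen fibers of `g`
  have hUcl : ∀ v : Fin n → A, IsClopen {x | g x = v} :=
    fun v => g.isLocallyConstant.isClopen_fiber v
  -- value of the characteristic functions
  have hchar : ∀ (v : Fin n → A) (x : S),
      (charFn A (hUcl v)) x = if g x = v then (1 : A) else 0 := by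
    intro v x
    change (charFn A (hUcl v) : S → A) x = _
    rw [coe_charFn, Set.indicator_apply]
    by_cases hx : g x = v
    · rw [if_pos hx, if_pos (by exact hx)]; rfl
    · rw [if_neg hx, if_neg (by exact hx)]
  -- the generators of the kernel
  set E : (Fin n → A) → (Fin n → A) → (Fin n → LocallyConstant S A) :=
    fun v w i => charFn A (hUcl v) * const S (w i) with hE
  have hEx : ∀ v w i x, (E v w i) x = (if g x = v then (1 : A) else 0) * w i := by
    intro v w i x
    simp only [hE, LocallyConstant.coe_mul, Pi.mul_apply, hchar, LocallyConstant.coe_const,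
      Function.const_apply]
  set GS : Set (Fin n → LocallyConstant S A) := ⋃ v ∈ V, E v '' (T v) with hGS
  have hGSfin : GS.Finite :=
    Set.Finite.biUnion V.finite_toSet (fun v _ => ((T v).finite_toSet.image _))
  rw [Submodule.fg_def]
  refine ⟨GS, hGSfin, le_antisymm (Submodule.span_le.mpr ?_) ?_⟩
  · -- each generator is in the kernel
    rintro e he
    simp only [hGS, Set.mem_iUnion, Set.mem_image] at he
    obtain ⟨v, hv, w, hw, rfl⟩ := he
    have hwK : (Fintype.linearCombination A v) w = 0 := hTsub v w hw
    rw [Fintype.linearCombination_apply] at hwK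
    simp only [SetLike.mem_coe, LinearMap.mem_ker, hl, Fintype.linearCombination_apply]
    ext x
    rw [lc_sum_apply, LocallyConstant.coe_zero, Pi.zero_apply]
    by_cases hx : g x = v
    · have hfx : ∀ i, f i x = v i := fun i => congrFun hx i
      calc ∑ i, (E v w i • f i) x = ∑ i, w i • v i := by
            refine Finset.sum_congr rfl fun i _ => ?_
            simp only [smul_eq_mul, LocallyConstant.coe_mul, Pi.mul_apply, hEx, hfx,
              if_pos hx, one_mul]
          _ = 0 := hwK
    · refine Finset.sum_eq_zero fun i _ => ?_
      simp only [smul_eq_mul, LocallyConstant.coe_mul, Pi.mul_apply, hEx, if_neg hx,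
        zero_mul]
  · -- the kernel is contained in the span
    intro c hc
    simp only [SetLike.mem_coe, LinearMap.mem_ker, hl, Fintype.linearCombination_apply] at hc
    -- combined locally constant map from `c`
    set c' : LocallyConstant S (Fin n → A) := ⟨fun x i => c i x, isLocallyConstant_pi c⟩ with hc'
    have hcK : ∀ x : S, c' x ∈ K (g x) := by
      intro x
      have h0 : (∑ j, c j • f j) x = (0 : LocallyConstant S A) x := by rw [hc]
      rw [lc_sum_apply] at h0
      simp only [LocallyConstant.coe_zero, Pi.zero_apply] at h0
      simp only [hK, LinearMap.mem_ker, Fintype.linearCombination_apply]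
      exact h0
    -- choose coefficients
    have hcoef : ∀ v u, ∃ a : (Fin n → A) → A, u ∈ K v → ∑ w ∈ T v, a w • w = u := by
      intro v u
      by_cases h : u ∈ K v
      · obtain ⟨a, -, ha⟩ := Submodule.mem_span_finset.mp ((hT v).symm ▸ h)
        exact ⟨a, fun _ => ha⟩
      · exact ⟨0, fun h' => absurd h' h⟩
    choose a ha using hcoef
    -- the locally constant coefficient functions
    set P : LocallyConstant S ((Fin n → A) × (Fin n → A)) :=
      ⟨fun x => (g x, c' x), g.isLocallyConstant.prodMk c'.isLocallyConstant⟩ with hP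
    set d : (Fin n → A) → (Fin n → A) → LocallyConstant S A :=
      fun v w => P.map (fun p => if p.1 = v then a p.1 p.2 w else 0) with hd
    have hdx : ∀ v w x, (d v w) x = if g x = v then a (g x) (c' x) w else 0 := by
      intro v w x; rfl
    have key : c = ∑ v ∈ V, ∑ w ∈ T v, d v w • E v w := by
      funext i
      ext x
      have h1 : ((∑ v ∈ V, ∑ w ∈ T v, d v w • E v w) i) x
          = ∑ v ∈ V, ∑ w ∈ T v, (d v w) x * ((E v w i) x) := by
        rw [Finset.sum_apply]
        rw [lc_sum_apply]
        refine Finset.sum_congr rfl fun v _ => ?_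
        rw [Finset.sum_apply, lc_sum_apply]
        refine Finset.sum_congr rfl fun w _ => ?_
        simp only [Pi.smul_apply, smul_eq_mul, LocallyConstant.coe_mul, Pi.mul_apply]
      rw [h1]
      have hgx : g x ∈ V := (Set.Finite.mem_toFinset _).mpr ⟨x, rfl⟩
      rw [Finset.sum_eq_single (g x)]
      · have hstep : ∑ w ∈ T (g x), (d (g x) w) x * (E (g x) w i) x
            = ∑ w ∈ T (g x), a (g x) (c' x) w * w i := by
          refine Finset.sum_congr rfl fun w _ => ?_
          rw [hdx, if_pos rfl, hEx, if_pos rfl, one_mul]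
        rw [hstep]
        have h2 := congrFun (ha (g x) (c' x) (hcK x)) i
        rw [Finset.sum_apply] at h2
        simp only [Pi.smul_apply, smul_eq_mul] at h2
        rw [h2]
        rfl
      · intro v _ hv
        refine Finset.sum_eq_zero fun w _ => ?_
        rw [hdx, if_neg (fun h => hv h.symm), zero_mul]
      · intro h
        exact absurd hgx h
    rw [key]
    refine Submodule.sum_mem _ fun v hv => Submodule.sum_mem _ fun w hw =>
      Submodule.smul_mem _ _ (Submodule.subset_span ?_)
    simp only [hGS, Set.mem_iUnion, Set.mem_image]
    exact ⟨v, hv, w, hw, rfl⟩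

end Aux

/-- Let `A` be a noetherian ring and `S` a profinite set.  Then the ring `LC(S,A)` of locally
constant functions `S → A` is coherent: every finitely generated ideal of `LC(S,A)` is
finitely presented as a module. -/
theorem locallyConstant_coherent
    (A : Type*) [CommRing A] [IsNoetherianRing A]
    (S : Type*) [TopologicalSpace S] [CompactSpace S] [T2Space S] [TotallyDisconnectedSpace S] :
    ∀ J : Ideal (LocallyConstant S A), J.FG →
      Module.FinitePresentation (LocallyConstant S A) J := by
  intro J hJ
  obtain ⟨n, f, hf⟩ := Submodule.fg_iff_exists_fin_generating_family.mp hJ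
  have hrange : LinearMap.range (Fintype.linearCombination (LocallyConstant S A)
      f) = J := by
    rw [Fintype.range_linearCombination]
    exact hf
  have hmem : ∀ c, (Fintype.linearCombination (LocallyConstant S A)
      f) c ∈ J := fun c => hrange ▸ LinearMap.mem_range_self _ c
  have hsurj : Function.Surjective ((Fintype.linearCombination (LocallyConstant S A)
      f).codRestrict J hmem) := by
    rintro ⟨y, hy⟩
    obtain ⟨c, hc⟩ := LinearMap.mem_range.mp (hrange ▸ hy)
    exact ⟨c, Subtype.ext hc⟩
  refine Module.finitePresentation_of_surjective _ hsurj ?_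
  rw [LinearMap.ker_codRestrict]
  exact ker_lincomb_fg A S n f
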